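/- Let X be a complete metric space and G_0, G_1 : X → X be 1/2-Lipschitz maps. For each a ∈ Σ (one-sided boolean sequences), the sequence x_k(a) := fixed point of G_{a_0}∘⋯∘G_{a_k} is Cauchy, so the limit H(a) := lim_k x_k(a) exists; moreover the resulting map H : Σ → X is continuous and satisfies the conjugacy H(σ_i a) = G_i(H(a)) for i = 0,1. -/
import Mathlib


def compWord {X : Type*} (G : Bool → X → X) (w : List Bool) : X → X :=
  w.foldr (fun i f => G i ∘ f) id

def prependSymb (i : Bool) (a : ℕ → Bool) : ℕ → Bool :=
  fun k => match k with
  | 0 => i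
  | n + 1 => a n

lemma compWord_foldr_apply {X : Type*} (G : Bool → X → X) (w : List Bool)
    (g : X → X) (x : X) :
    w.foldr (fun i f => G i ∘ f) g x = compWord G w (g x) := by
  induction w with
  | nil => simp [compWord]
  | cons i w ih => simp [compWord, List.foldr_cons, Function.comp, ih]

lemma compWord_append_singleton {X : Type*} (G : Bool → X → X) (w : List Bool)
    (i : Bool) (x : X) :
    compWord G (w ++ [i]) x = compWord G w (G i x) := by
  rw [compWord, List.foldr_append]
  simpa using compWord_foldr_apply G w (G i ∘ id) x

lemma compWord_cons {X : Type*} (G : Bool → X → X) (w : List Bool)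
    (i : Bool) (x : X) :
    compWord G (i :: w) x = G i (compWord G w x) := by
  simp [compWord, List.foldr_cons, Function.comp]

lemma compWord_lip {X : Type*} [MetricSpace X] (G : Bool → X → X)
    (hG : ∀ i : Bool, ∀ x y : X, dist (G i x) (G i y) ≤ (1 / 2) * dist x y)
    (w : List Bool) (x y : X) :
    dist (compWord G w x) (compWord G w y) ≤ (1 / 2) ^ w.length * dist x y := by
  induction w with
  | nil => simp [compWord]
  | cons i w ih =>
    rw [compWord_cons, compWord_cons, List.length_cons, pow_succ]
    calc dist (G i (compWord G w x)) (G i (compWord G w y))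
        ≤ (1 / 2) * dist (compWord G w x) (compWord G w y) := hG _ _ _
      _ ≤ (1 / 2) * ((1 / 2) ^ w.length * dist x y) := by
          apply mul_le_mul_of_nonneg_left ih; norm_num
      _ = (1 / 2) ^ w.length * (1 / 2) * dist x y := by ring

/-- Let `G_0, G_1 : X → X` be `1/2`-Lipschitz maps of a complete metric space.
If `x a k` denotes a fixed point of `G_{a_0} ∘ ⋯ ∘ G_{a_k}`, then for each
boolean sequence `a` the sequence `k ↦ x a k` is Cauchy; the limit `H a`
exists, `H` is continuous (w.r.t. the product topology on `ℕ → Bool`, which is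
the topology of the metric `d`), and `H (σ_i a) = G_i (H a)`. -/
theorem conjugacy_map_exists {X : Type*} [MetricSpace X] [CompleteSpace X]
    [Nonempty X] (G : Bool → X → X)
    (hG : ∀ i : Bool, ∀ x y : X, dist (G i x) (G i y) ≤ (1 / 2) * dist x y)
    (x : (ℕ → Bool) → ℕ → X)
    (hx : ∀ (a : ℕ → Bool) (k : ℕ),
      compWord G (List.ofFn fun j : Fin (k + 1) => a j) (x a k) = x a k) :
    (∀ a : ℕ → Bool, CauchySeq (x a)) ∧
    ∃ H : (ℕ → Bool) → X,
      Continuous H ∧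
      (∀ a : ℕ → Bool, Filter.Tendsto (x a) Filter.atTop (nhds (H a))) ∧
      (∀ (i : Bool) (a : ℕ → Bool), H (prependSymb i a) = G i (H a)) := by
  classical
  set z : X := Classical.arbitrary X with hz
  set C : ℝ := max (dist z (G false z)) (dist z (G true z)) with hCdef
  have hC0 : 0 ≤ C := le_trans dist_nonneg (le_max_left _ _)
  have hCb : ∀ i : Bool, dist z (G i z) ≤ C := by
    intro i; cases i
    · exact le_max_left _ _
    · exact le_max_right _ _
  -- the orbit of the base point
  set u : (ℕ → Bool) → ℕ → X :=
    fun a k => compWord G (List.ofFn fun j : Fin (k + 1) => a j) z with hu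
  have hulen : ∀ (a : ℕ → Bool) (k : ℕ),
      (List.ofFn fun j : Fin (k + 1) => a j).length = k + 1 := by
    intro a k; simp
  have hsucc : ∀ (a : ℕ → Bool) (k : ℕ),
      u a (k + 1) = compWord G (List.ofFn fun j : Fin (k + 1) => a j)
        (G (a (k + 1)) z) := by
    intro a k
    rw [hu]
    simp only
    rw [List.ofFn_succ' (fun j : Fin (k + 2) => a j)]
    rw [List.concat_eq_append, compWord_append_singleton]
    simp [Fin.last]
  have hstep : ∀ (a : ℕ → Bool) (k : ℕ),
      dist (u a k) (u a (k + 1)) ≤ (C / 2) * (1 / 2) ^ k := by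
    intro a k
    rw [hsucc a k]
    calc dist (u a k) (compWord G (List.ofFn fun j : Fin (k + 1) => a j)
          (G (a (k + 1)) z))
        ≤ (1 / 2) ^ (k + 1) * dist z (G (a (k + 1)) z) := by
          have := compWord_lip G hG (List.ofFn fun j : Fin (k + 1) => a j) z
            (G (a (k + 1)) z)
          rwa [hulen] at this
      _ ≤ (1 / 2) ^ (k + 1) * C := by
          apply mul_le_mul_of_nonneg_left (hCb _); positivity
      _ = (C / 2) * (1 / 2) ^ k := by ring
  have hucauchy : ∀ a : ℕ → Bool, CauchySeq (u a) :=
    fun a => cauchySeq_of_le_geometric (1 / 2) (C / 2) (by norm_num) (hstep a)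
  have hHex : ∀ a : ℕ → Bool, ∃ y : X,
      Filter.Tendsto (u a) Filter.atTop (nhds y) :=
    fun a => cauchySeq_tendsto_of_complete (hucauchy a)
  set H : (ℕ → Bool) → X := fun a => (hHex a).choose with hH
  have hHt : ∀ a : ℕ → Bool, Filter.Tendsto (u a) Filter.atTop (nhds (H a)) :=
    fun a => (hHex a).choose_spec
  -- distance from u a n to the limit
  have hdistH : ∀ (a : ℕ → Bool) (n : ℕ), dist (u a n) (H a) ≤ C * (1 / 2) ^ n := by
    intro a n
    have := dist_le_of_le_geometric_of_tendsto (1 / 2) (C / 2)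
      (by norm_num) (hstep a) (hHt a) n
    calc dist (u a n) (H a) ≤ (C / 2) * (1 / 2) ^ n / (1 - 1 / 2) := this
      _ = C * (1 / 2) ^ n := by ring
  -- u a k stays at bounded distance from z
  have hu0 : ∀ a : ℕ → Bool, dist (u a 0) z ≤ C := by
    intro a
    have : u a 0 = G (a 0) z := by
      rw [hu]; simp [compWord]
    rw [this, dist_comm]
    exact hCb _
  have hHz : ∀ a : ℕ → Bool, dist (H a) z ≤ 2 * C := by
    intro a
    calc dist (H a) z ≤ dist (H a) (u a 0) + dist (u a 0) z := dist_triangle _ _ _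
      _ ≤ C * (1 / 2) ^ 0 + C := by
          gcongr
          · rw [dist_comm]; exact hdistH a 0
          · exact hu0 a
      _ = 2 * C := by norm_num [two_mul]
  have huz : ∀ (a : ℕ → Bool) (k : ℕ), dist (u a k) z ≤ 3 * C := by
    intro a k
    calc dist (u a k) z ≤ dist (u a k) (H a) + dist (H a) z := dist_triangle _ _ _
      _ ≤ C * (1 / 2) ^ k + 2 * C := by gcongr; exacts [hdistH a k, hHz a]
      _ ≤ C * 1 + 2 * C := by
          gcongr
          · exact pow_le_one₀ (by norm_num) (by norm_num)
      _ = 3 * C := by ring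
  -- distance between x a k and u a k
  have hxu : ∀ (a : ℕ → Bool) (k : ℕ), dist (x a k) (u a k) ≤ 3 * C * (1 / 2) ^ k := by
    intro a k
    set d := dist (x a k) (u a k) with hd
    have hd0 : 0 ≤ d := dist_nonneg
    have hkey : d ≤ (1 / 2) ^ (k + 1) * (d + 3 * C) := by
      have h1 : d = dist (compWord G (List.ofFn fun j : Fin (k + 1) => a j) (x a k))
          (u a k) := by rw [hd, hx a k]
      have h2 : dist (compWord G (List.ofFn fun j : Fin (k + 1) => a j) (x a k))
          (u a k) ≤ (1 / 2) ^ (k + 1) * dist (x a k) z := by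
        have := compWord_lip G hG (List.ofFn fun j : Fin (k + 1) => a j) (x a k) z
        rwa [hulen] at this
      have h3 : dist (x a k) z ≤ d + 3 * C :=
        le_trans (dist_triangle _ (u a k) _) (by gcongr; exact huz a k)
      calc d = _ := h1
        _ ≤ (1 / 2) ^ (k + 1) * dist (x a k) z := h2
        _ ≤ (1 / 2) ^ (k + 1) * (d + 3 * C) := by
            apply mul_le_mul_of_nonneg_left h3; positivity
    have hp1 : (1 / 2 : ℝ) ^ k ≤ 1 := pow_le_one₀ (by norm_num) (by norm_num)
    have hp0 : (0 : ℝ) ≤ (1 / 2 : ℝ) ^ k := by positivity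
    have : (1 / 2 : ℝ) ^ (k + 1) = (1 / 2) ^ k / 2 := by ring
    rw [this] at hkey
    nlinarith
  -- x a k converges to H a
  have hxt : ∀ a : ℕ → Bool, Filter.Tendsto (x a) Filter.atTop (nhds (H a)) := by
    intro a
    rw [tendsto_iff_dist_tendsto_zero]
    have hb : ∀ k, dist (x a k) (H a) ≤ 4 * C * (1 / 2) ^ k := by
      intro k
      calc dist (x a k) (H a) ≤ dist (x a k) (u a k) + dist (u a k) (H a) :=
            dist_triangle _ _ _
        _ ≤ 3 * C * (1 / 2) ^ k + C * (1 / 2) ^ k := by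
            gcongr; exacts [hxu a k, hdistH a k]
        _ = 4 * C * (1 / 2) ^ k := by ring
    have hlim : Filter.Tendsto (fun k : ℕ => 4 * C * (1 / 2 : ℝ) ^ k)
        Filter.atTop (nhds 0) := by
      have := tendsto_pow_atTop_nhds_zero_of_lt_one
        (show (0:ℝ) ≤ 1 / 2 by norm_num) (by norm_num)
      simpa using this.const_mul (4 * C)
    exact squeeze_zero (fun k => dist_nonneg) hb hlim
  refine ⟨fun a => (hxt a).cauchySeq, H, ?_, hxt, ?_⟩
  · -- continuity
    rw [continuous_iff_continuousAt]
    intro a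
    rw [ContinuousAt, Metric.tendsto_nhds]
    intro ε hε
    have hlim : Filter.Tendsto (fun n : ℕ => 2 * C * (1 / 2 : ℝ) ^ n)
        Filter.atTop (nhds 0) := by
      have := tendsto_pow_atTop_nhds_zero_of_lt_one
        (show (0:ℝ) ≤ 1 / 2 by norm_num) (by norm_num)
      simpa using this.const_mul (2 * C)
    obtain ⟨n, hn⟩ := (hlim.eventually (gt_mem_nhds hε)).exists
    have hev : ∀ᶠ b in nhds a, ∀ j ∈ Finset.range (n + 1), b j = a j := by
      rw [Filter.eventually_all_finset]
      intro j _
      exact (continuous_apply j).continuousAt.eventually_mem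
        ((isOpen_discrete ({a j} : Set Bool)).mem_nhds rfl)
    filter_upwards [hev] with b hb
    have hub : u b n = u a n := by
      rw [hu]
      simp only
      congr 1
      rw [List.ofFn_inj]
      funext j
      exact hb j (Finset.mem_range.mpr j.isLt)
    calc dist (H b) (H a) ≤ dist (H b) (u b n) + dist (u a n) (H a) := by
          rw [hub]; exact dist_triangle _ _ _
      _ ≤ C * (1 / 2) ^ n + C * (1 / 2) ^ n := by
          gcongr
          · rw [dist_comm]; exact hdistH b n
          · exact hdistH a n
      _ = 2 * C * (1 / 2) ^ n := by ring
      _ < ε := hn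
  · -- conjugacy
    intro i a
    have hGc : Continuous (G i) := by
      apply (LipschitzWith.of_dist_le_mul (K := 1 / 2) ?_).continuous
      intro p q
      have := hG i p q
      push_cast
      linarith
    have h2 : ∀ k, u (prependSymb i a) (k + 1) = G i (u a k) := by
      intro k
      rw [hu]
      simp only
      have hlist : (List.ofFn fun j : Fin (k + 2) => prependSymb i a j)
          = i :: List.ofFn (fun j : Fin (k + 1) => a j) := by
        rw [List.ofFn_succ]
        simp [prependSymb]
      rw [hlist, compWord_cons]
    have h1 : Filter.Tendsto (fun k => u (prependSymb i a) (k + 1))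
        Filter.atTop (nhds (H (prependSymb i a))) :=
      (hHt (prependSymb i a)).comp (Filter.tendsto_add_atTop_nat 1)
    have h3 : Filter.Tendsto (fun k => G i (u a k)) Filter.atTop
        (nhds (G i (H a))) := (hGc.tendsto _).comp (hHt a)
    rw [show (fun k => u (prependSymb i a) (k + 1)) = fun k => G i (u a k)
      from funext h2] at h1
    exact tendsto_nhds_unique h1 h3
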